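/- For β > 0 and γ ∈ (1/2, 1), the integral ∫₀^{(2β)^{1/γ}} √(β²/t^{2γ} − 1/4) dt equals ((2β)^{1/γ}/(4γ)) · B(3/2, (1−γ)/(2γ)), where B is the Euler beta function. -/

import Mathlib

open MeasureTheory Real Filter Topology Set

lemma real_betaIntegral {p q : ℝ} (hp : 0 < p) (hq : 0 < q) :
    ∫ u in (0:ℝ)..1, u ^ (p-1) * (1-u) ^ (q-1) =
      Real.Gamma p * Real.Gamma q / Real.Gamma (p+q) := by
  have h := Complex.Gamma_mul_Gamma_eq_betaIntegral (s := (p:ℂ)) (t := (q:ℂ))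
    (by simpa using hp) (by simpa using hq)
  have hb : Complex.betaIntegral p q
      = ((∫ u in (0:ℝ)..1, u ^ (p-1) * (1-u) ^ (q-1) : ℝ) : ℂ) := by
    rw [Complex.betaIntegral, ← intervalIntegral.integral_ofReal]
    apply intervalIntegral.integral_congr
    intro u hu
    rw [Set.uIcc_of_le zero_le_one] at hu
    show _ = ((_ : ℝ) : ℂ)
    rw [Complex.ofReal_mul, Complex.ofReal_cpow hu.1, Complex.ofReal_cpow (by linarith [hu.2])]
    push_cast
    ring
  rw [hb, ← Complex.ofReal_add, Complex.Gamma_ofReal, Complex.Gamma_ofReal,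
    Complex.Gamma_ofReal, ← Complex.ofReal_mul, ← Complex.ofReal_mul] at h
  have hne : Real.Gamma (p+q) ≠ 0 := (Real.Gamma_pos_of_pos (by linarith)).ne'
  field_simp
  rw [Complex.ofReal_inj] at h
  linarith [h]

theorem turning_point_beta_integral (β γ : ℝ) (hβ : 0 < β)
    (hγ : γ ∈ Set.Ioo (1/2 : ℝ) 1) :
    (∫ t in (0:ℝ)..((2*β) ^ (1/γ)), Real.sqrt (β^2 / t ^ (2*γ) - 1/4)) =
      ((2*β) ^ (1/γ) / (4*γ)) *
        (Real.Gamma (3/2) * Real.Gamma ((1-γ)/(2*γ)) / Real.Gamma (3/2 + (1-γ)/(2*γ))) := by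
  obtain ⟨hγ1, hγ2⟩ := hγ
  have hγ0 : 0 < γ := by linarith
  set a : ℝ := (2*β) ^ (1/γ) with ha_def
  set c : ℝ := 1/(2*γ) with hc_def
  set x : ℝ := (1-γ)/(2*γ) with hx_def
  have ha : 0 < a := Real.rpow_pos_of_pos (by linarith) _
  have hc : 0 < c := by rw [hc_def]; positivity
  have hc1 : c < 1 := by rw [hc_def, div_lt_one (by linarith)]; linarith
  have hx : 0 < x := by rw [hx_def]; apply div_pos <;> linarith
  have hx1 : x < 1 := by rw [hx_def, div_lt_one (by linarith)]; linarith
  set g : ℝ → ℝ := fun t => Real.sqrt (β^2 / t ^ (2*γ) - 1/4) with hg_def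
  set φ : ℝ → ℝ := fun u => a * u ^ c with hφ_def
  set φ' : ℝ → ℝ := fun u => a * (c * u ^ (c-1)) with hφ'_def
  have hφ0 : φ 0 = 0 := by simp [hφ_def, Real.zero_rpow hc.ne']
  have hφ1 : φ 1 = a := by simp [hφ_def]
  have haγ : a ^ (2*γ) = 4*β^2 := by
    have h1 : a ^ (2*γ) = (2*β) ^ ((1/γ)*(2*γ)) := by
      rw [ha_def, ← Real.rpow_mul (by linarith)]
    have h2 : (1/γ)*(2*γ) = ((2:ℕ):ℝ) := by push_cast; field_simp
    rw [h1, h2, Real.rpow_natCast]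
    ring
  have hrpow_cont : Continuous fun u : ℝ => u ^ c :=
    continuous_iff_continuousAt.2 fun y => Real.continuousAt_rpow_const y c (Or.inr hc.le)
  have h2γcont : Continuous fun t : ℝ => t ^ (2*γ) :=
    continuous_iff_continuousAt.2 fun y =>
      Real.continuousAt_rpow_const y (2*γ) (Or.inr (by linarith))
  have hsq2 : ∀ v : ℝ, 0 ≤ v → (v ^ ((1:ℝ)/2))^2 = v := by
    intro v hv
    rw [← Real.rpow_natCast (v ^ ((1:ℝ)/2)) 2, ← Real.rpow_mul hv]
    norm_num
  -- key pointwise identity on [0,1]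
  have hkey : ∀ u ∈ Set.Icc (0:ℝ) 1,
      g (φ u) * φ' u = (a/(4*γ)) * (u ^ (x-1) * (1-u) ^ ((3:ℝ)/2 - 1)) := by
    intro u hu
    rcases eq_or_lt_of_le hu.1 with h0 | h0
    · rw [← h0]
      simp [hg_def, hφ_def, hφ'_def, Real.zero_rpow hc.ne',
        Real.zero_rpow (sub_ne_zero.mpr hx1.ne),
        Real.zero_rpow (sub_ne_zero.mpr hc1.ne)]
    · have hu1 : u ≤ 1 := hu.2
      have hφu : (φ u) ^ (2*γ) = 4*β^2*u := by
        show (a * u ^ c) ^ (2*γ) = _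
        rw [Real.mul_rpow ha.le (Real.rpow_nonneg h0.le c),
          ← Real.rpow_mul h0.le, haγ,
          show c * (2*γ) = 1 by
            rw [hc_def, one_div, inv_mul_cancel₀ (ne_of_gt (by linarith : (0:ℝ) < 2*γ))],
          Real.rpow_one]
      have hinner : β^2 / (φ u) ^ (2*γ) - 1/4 = (1-u)/(4*u) := by
        rw [hφu]; field_simp
      have hmid : (0:ℝ) ≤ (1-u) ^ ((1:ℝ)/2) * u ^ (-((1:ℝ)/2)) / 2 :=
        div_nonneg (mul_nonneg (Real.rpow_nonneg (by linarith) _)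
          (Real.rpow_nonneg h0.le _)) (by norm_num)
      have hupow : (u ^ (-((1:ℝ)/2)))^2 = u⁻¹ := by
        rw [← Real.rpow_natCast (u ^ (-((1:ℝ)/2))) 2, ← Real.rpow_mul h0.le,
          show -((1:ℝ)/2) * ((2:ℕ):ℝ) = -1 by push_cast; ring, Real.rpow_neg_one]
      have hsqA : Real.sqrt ((1-u)/(4*u)) = (1-u) ^ ((1:ℝ)/2) * u ^ (-((1:ℝ)/2)) / 2 := by
        rw [show (1-u)/(4*u) = ((1-u) ^ ((1:ℝ)/2) * u ^ (-((1:ℝ)/2)) / 2)^2 by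
          rw [div_pow, mul_pow, hsq2 (1-u) (by linarith), hupow]
          field_simp
          ring]
        exact Real.sqrt_sq hmid
      have hxc : x - 1 = (c-1) + (-((1:ℝ)/2)) := by
        rw [hx_def, hc_def]; field_simp; ring
      show Real.sqrt (β^2 / (φ u) ^ (2*γ) - 1/4) * (a * (c * u ^ (c-1))) = _
      rw [hinner, hsqA, hxc, Real.rpow_add h0,
        show ((3:ℝ)/2 - 1) = 1/2 by norm_num, hc_def]
      field_simp
      ring
  -- continuity of φ
  have hφcont : ContinuousOn φ (Set.uIcc (0:ℝ) 1) :=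
    (continuous_const.mul hrpow_cont).continuousOn
  -- derivative
  have hφderiv : ∀ y ∈ Set.Ioo (min (0:ℝ) 1) (max (0:ℝ) 1),
      HasDerivWithinAt φ (φ' y) (Set.Ioi y) y := by
    intro y hy
    rw [show min (0:ℝ) 1 = 0 by norm_num, show max (0:ℝ) 1 = 1 by norm_num] at hy
    exact ((Real.hasDerivAt_rpow_const (p := c) (Or.inl hy.1.ne')).const_mul a).hasDerivWithinAt
  -- continuity of g on the image of the open interval
  have hgcont : ContinuousOn g (φ '' Set.Ioo (min (0:ℝ) 1) (max (0:ℝ) 1)) := by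
    have hsub : φ '' Set.Ioo (min (0:ℝ) 1) (max (0:ℝ) 1) ⊆ Set.Ioi 0 := by
      rintro _ ⟨u, hu, rfl⟩
      rw [show min (0:ℝ) 1 = 0 by norm_num, show max (0:ℝ) 1 = 1 by norm_num] at hu
      exact mul_pos ha (Real.rpow_pos_of_pos hu.1 c)
    refine ContinuousOn.mono ?_ hsub
    rw [hg_def]
    apply Real.continuous_sqrt.comp_continuousOn
    apply ContinuousOn.sub _ continuousOn_const
    apply ContinuousOn.div continuousOn_const h2γcont.continuousOn
    intro t ht
    exact (Real.rpow_pos_of_pos ht (2*γ)).ne'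
  -- measurability of g
  have hmeas_g : Measurable g := by
    rw [hg_def]
    exact ((measurable_const.div h2γcont.measurable).sub measurable_const).sqrt
  -- integrability of g on the image of [0,1]
  have hg1 : IntegrableOn g (φ '' Set.uIcc (0:ℝ) 1) := by
    have hsub : φ '' Set.uIcc (0:ℝ) 1 ⊆ Set.Icc 0 a := by
      rintro _ ⟨u, hu, rfl⟩
      rw [Set.uIcc_of_le zero_le_one] at hu
      refine ⟨mul_nonneg ha.le (Real.rpow_nonneg hu.1 c), ?_⟩
      show a * u ^ c ≤ a
      nth_rewrite 2 [← mul_one a]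
      exact mul_le_mul_of_nonneg_left (Real.rpow_le_one hu.1 hu.2 hc.le) ha.le
    refine MeasureTheory.IntegrableOn.mono_set ?_ hsub
    have hbound : IntervalIntegrable (fun t : ℝ => β * t ^ (-γ)) volume 0 a :=
      (intervalIntegral.intervalIntegrable_rpow' (by linarith)).const_mul β
    have hbound' : IntegrableOn (fun t : ℝ => β * t ^ (-γ)) (Set.Icc 0 a) :=
      (intervalIntegrable_iff_integrableOn_Icc_of_le ha.le).mp hbound
    refine MeasureTheory.Integrable.mono hbound' hmeas_g.aestronglyMeasurable.restrict ?_
    refine (ae_restrict_iff' measurableSet_Icc).mpr (ae_of_all _ fun t ht => ?_)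
    rcases eq_or_lt_of_le ht.1 with h0 | h0
    · rw [← h0]
      have hg0 : g 0 = 0 := by
        show Real.sqrt (β^2 / (0:ℝ)^(2*γ) - 1/4) = 0
        rw [Real.zero_rpow (ne_of_gt (by linarith : (0:ℝ) < 2*γ)), div_zero]
        exact Real.sqrt_eq_zero_of_nonpos (by norm_num)
      rw [hg0, norm_zero]
      exact norm_nonneg _
    · have h1 : β^2 / t^(2*γ) = (β * t^(-γ))^2 := by
        rw [mul_pow, ← Real.rpow_natCast (t^(-γ)) 2, ← Real.rpow_mul h0.le,
          show -γ * ((2:ℕ):ℝ) = -(2*γ) by push_cast; ring,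
          Real.rpow_neg h0.le, div_eq_mul_inv]
      have hnn : (0:ℝ) ≤ β * t^(-γ) := by positivity
      rw [Real.norm_of_nonneg (Real.sqrt_nonneg _), Real.norm_of_nonneg hnn]
      calc Real.sqrt (β^2 / t^(2*γ) - 1/4) ≤ Real.sqrt (β^2 / t^(2*γ)) :=
            Real.sqrt_le_sqrt (by linarith)
        _ = β * t^(-γ) := by rw [h1, Real.sqrt_sq hnn]
  -- integrability of the beta-type integrand
  have hdom : IntegrableOn (fun u : ℝ => u ^ (x-1)) (Set.Icc 0 1) :=
    (intervalIntegrable_iff_integrableOn_Icc_of_le zero_le_one).mp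
      (intervalIntegral.intervalIntegrable_rpow' (by linarith))
  have hbetaint : IntegrableOn
      (fun u : ℝ => (a/(4*γ)) * (u ^ (x-1) * (1-u) ^ ((3:ℝ)/2 - 1))) (Set.Icc 0 1) := by
    apply Integrable.const_mul
    have hcont2 : Continuous fun u : ℝ => (1-u) ^ ((3:ℝ)/2 - 1) := by
      have : Continuous fun v : ℝ => v ^ ((3:ℝ)/2 - 1) :=
        continuous_iff_continuousAt.2 fun y =>
          Real.continuousAt_rpow_const y _ (Or.inr (by norm_num))
      exact this.comp (continuous_const.sub continuous_id)
    refine MeasureTheory.Integrable.mono hdom (hdom.aestronglyMeasurable.mul hcont2.aestronglyMeasurable) ?_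
    refine (ae_restrict_iff' measurableSet_Icc).mpr (ae_of_all _ fun u hu => ?_)
    rw [norm_mul]
    refine mul_le_of_le_one_right (norm_nonneg _) ?_
    rw [Real.norm_of_nonneg (Real.rpow_nonneg (by linarith [hu.2]) _)]
    exact Real.rpow_le_one (by linarith [hu.2]) (by linarith [hu.1]) (by norm_num)
  have hg2 : IntegrableOn (fun u => (g ∘ φ) u * φ' u) (Set.uIcc (0:ℝ) 1) := by
    rw [Set.uIcc_of_le zero_le_one]
    exact hbetaint.congr_fun (fun u hu => (hkey u hu).symm) measurableSet_Icc
  -- change of variables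
  have hsub := intervalIntegral.integral_comp_mul_deriv''' hφcont hφderiv hgcont hg1 hg2
  rw [hφ0, hφ1] at hsub
  have hcongr : (∫ u in (0:ℝ)..1, (g ∘ φ) u * φ' u)
      = ∫ u in (0:ℝ)..1, (a/(4*γ)) * (u ^ (x-1) * (1-u) ^ ((3:ℝ)/2 - 1)) := by
    apply intervalIntegral.integral_congr
    intro u hu
    rw [Set.uIcc_of_le zero_le_one] at hu
    exact hkey u hu
  rw [← hsub, hcongr, intervalIntegral.integral_const_mul,
    real_betaIntegral hx (by norm_num : (0:ℝ) < 3/2), add_comm x (3/2)]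
  ring
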